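/- Let p be a prime number and let A be a commutative Noetherian ring that is p-torsion-free and classically p-adically complete, and let φ : A → A be a ring homomorphism with φ(a) ≡ a^p (mod pA) for all a ∈ A (a Frobenius lift). Suppose there exist elements x_1, …, x_d ∈ A such that A/pA, regarded as a module over itself by restriction of scalars along its Frobenius endomorphism x ↦ x^p, is free with basis the p^d monomials x̄_1^{a_1}⋯x̄_d^{a_d} with 0 ≤ a_i ≤ p−1. Then A, regarded as a module over itself by restriction of scalars along φ, is free with basis the monomials x_1^{a_1}⋯x_d^{a_d} (0 ≤ a_i ≤ p−1); in particular φ is faithfully flat. -/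

import Mathlib

/-- A ring homomorphism `f : R → S` is *faithfully flat* if it makes `S` a
faithfully flat `R`-module (the `R`-module structure on `S` being restriction
of scalars along `f`). -/
def RingHomFaithfullyFlat {R S : Type*} [CommRing R] [CommRing S] (f : R →+* S) : Prop :=
  letI : Module R S := f.toModule
  Module.FaithfullyFlat R S

/-!
Let A be a Noetherian, p-torsion-free, classically p-adically complete
commutative ring and φ : A → A a Frobenius lift.  Suppose x₁, …, x_d ∈ A are
such that A/pA, as a module over itself via its Frobenius endomorphism
x ↦ x^p, is free with basis the p^d monomials x̄₁^{a₁}⋯x̄_d^{a_d},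
0 ≤ aᵢ ≤ p−1 (i.e. every y ∈ A/pA is uniquely y = Σ_a c_a^p · x̄^a).  Then A,
as a module over itself via φ, is free with basis the monomials
x₁^{a₁}⋯x_d^{a_d} (i.e. every y ∈ A is uniquely y = Σ_a φ(c_a)·x^a); in
particular φ is faithfully flat.
-/

section Aux

variable {A : Type*} [CommRing A] (p : ℕ) (hp : p.Prime)
  (hpA : (p : A) ∈ nonZeroDivisors A)
  (φ : A →+* A) (hφ : ∀ a : A, φ a - a ^ p ∈ Ideal.span {(p : A)})
  {d : ℕ} (x : Fin d → A)

/-- The "linear combination" map `c ↦ ∑ φ(c a) * x^a`. -/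
noncomputable def Tcomb (c : (Fin d → Fin p) → A) : A :=
  ∑ a : Fin d → Fin p, φ (c a) * ∏ i : Fin d, (x i) ^ ((a i : ℕ))

lemma Tcomb_add (c c' : (Fin d → Fin p) → A) :
    Tcomb p φ x (c + c') = Tcomb p φ x c + Tcomb p φ x c' := by
  simp [Tcomb, add_mul, Finset.sum_add_distrib]

lemma Tcomb_sub (c c' : (Fin d → Fin p) → A) :
    Tcomb p φ x (c - c') = Tcomb p φ x c - Tcomb p φ x c' := by
  simp [Tcomb, sub_mul, Finset.sum_sub_distrib]

lemma Tcomb_zero : Tcomb p φ x (0 : (Fin d → Fin p) → A) = 0 := by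
  simp [Tcomb]

lemma Tcomb_mul (r : A) (c : (Fin d → Fin p) → A) :
    Tcomb p φ x (fun a => r * c a) = φ r * Tcomb p φ x c := by
  simp [Tcomb, Finset.mul_sum, mul_assoc]

lemma Tcomb_pow_mul (n : ℕ) (c : (Fin d → Fin p) → A) :
    Tcomb p φ x (fun a => (p : A) ^ n * c a) = (p : A) ^ n * Tcomb p φ x c := by
  rw [Tcomb_mul, map_pow, map_natCast]

lemma Tcomb_dvd (n : ℕ) (c : (Fin d → Fin p) → A) (h : ∀ a, (p : A) ^ n ∣ c a) :
    (p : A) ^ n ∣ Tcomb p φ x c := by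
  apply Finset.dvd_sum
  intro a _
  apply dvd_mul_of_dvd_left
  have := map_dvd φ (h a)
  rwa [map_pow, map_natCast] at this

end Aux

theorem frobenius_lift_finite_free_and_faithfullyFlat_of_finite_p_basis
    {A : Type*} [CommRing A] [IsNoetherianRing A] (p : ℕ) (hp : p.Prime)
    (hpA : (p : A) ∈ nonZeroDivisors A)
    (hcomp : IsAdicComplete (Ideal.span {(p : A)}) A)
    (φ : A →+* A) (hφ : ∀ a : A, φ a - a ^ p ∈ Ideal.span {(p : A)})
    (d : ℕ) (x : Fin d → A)
    (hbasis : ∀ y : A ⧸ Ideal.span {(p : A)},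
      ∃! c : (Fin d → Fin p) → A ⧸ Ideal.span {(p : A)},
        y = ∑ a : Fin d → Fin p,
          (c a) ^ p * ∏ i : Fin d,
            (Ideal.Quotient.mk (Ideal.span {(p : A)}) (x i)) ^ ((a i : ℕ))) :
    (∀ y : A, ∃! c : (Fin d → Fin p) → A,
      y = ∑ a : Fin d → Fin p, φ (c a) * ∏ i : Fin d, (x i) ^ ((a i : ℕ))) ∧
    RingHomFaithfullyFlat φ := by
  set I : Ideal A := Ideal.span {(p : A)} with hI
  set π : A →+* A ⧸ I := Ideal.Quotient.mk I with hπ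
  set T : ((Fin d → Fin p) → A) → A := Tcomb p φ x with hT
  -- reduction of φ mod p is the p-th power map
  have hπφ : ∀ a : A, π (φ a) = (π a) ^ p := by
    intro a
    rw [← map_pow, ← sub_eq_zero, ← map_sub, hπ, Ideal.Quotient.eq_zero_iff_mem]
    exact hφ a
  have hTmod : ∀ c, π (T c) = ∑ a : Fin d → Fin p, (π (c a)) ^ p *
      ∏ i : Fin d, (π (x i)) ^ ((a i : ℕ)) := by
    intro c
    simp [hT, Tcomb, map_sum, map_mul, map_prod, map_pow, hπφ]
  -- uniqueness of the representation of 0 mod p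
  have hzero : ∀ cbar : (Fin d → Fin p) → A ⧸ I,
      ((0 : A ⧸ I) = ∑ a : Fin d → Fin p, (cbar a) ^ p *
        ∏ i : Fin d, (π (x i)) ^ ((a i : ℕ))) → cbar = 0 := by
    intro cbar h
    obtain ⟨c₀, _, huniq⟩ := hbasis 0
    have h1 := huniq cbar h
    have h2 := huniq 0 (by simp [zero_pow hp.ne_zero])
    rw [h1, ← h2]
  -- one step of division by p
  have hstepdiv : ∀ g : (Fin d → Fin p) → A, T g = 0 →
      ∃ f : (Fin d → Fin p) → A, (∀ a, g a = (p : A) * f a) ∧ T f = 0 := by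
    intro g hg
    have h0 : (fun a => π (g a)) = 0 := by
      apply hzero
      rw [← hTmod, hg, map_zero]
    have hdvd : ∀ a, (p : A) ∣ g a := by
      intro a
      have : π (g a) = 0 := congrFun h0 a
      rwa [hπ, Ideal.Quotient.eq_zero_iff_mem, hI, Ideal.mem_span_singleton] at this
    choose f hf using hdvd
    refine ⟨f, hf, ?_⟩
    have : T (fun a => (p : A) * f a) = 0 := by
      rw [show (fun a => (p : A) * f a) = g from funext fun a => (hf a).symm, hg]
    rw [hT, show (fun a => (p : A) * f a) = (fun a => (p : A) ^ 1 * f a) by simp,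
      Tcomb_pow_mul] at this
    rw [pow_one] at this
    exact (mul_right_mem_nonZeroDivisors_eq_zero_iff hpA).mp (by rwa [mul_comm] at this)
  -- injectivity of T
  have hinj : ∀ c : (Fin d → Fin p) → A, T c = 0 → c = 0 := by
    intro c hc
    have key : ∀ n : ℕ, ∃ f : (Fin d → Fin p) → A,
        (∀ a, c a = (p : A) ^ n * f a) ∧ T f = 0 := by
      intro n
      induction n with
      | zero => exact ⟨c, fun a => by simp, hc⟩
      | succ n ih =>
        obtain ⟨f, hf, hf0⟩ := ih
        obtain ⟨f', hf', hf'0⟩ := hstepdiv f hf0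
        exact ⟨f', fun a => by rw [hf a, hf' a, pow_succ, mul_assoc], hf'0⟩
    funext a
    show c a = 0
    refine IsHausdorff.haus hcomp.toIsHausdorff (c a) fun n => ?_
    rw [SModEq.zero]
    obtain ⟨f, hf, -⟩ := key n
    have hmem : c a ∈ I ^ n := by
      rw [hI, Ideal.span_singleton_pow, Ideal.mem_span_singleton]
      exact ⟨f a, hf a⟩
    simpa using Submodule.smul_mem_smul hmem (Submodule.mem_top (x := (1 : A)))
  -- the smul-top submodule is contained in the ideal power
  have hle : ∀ n : ℕ, (I ^ n • ⊤ : Submodule A A) ≤ (I ^ n : Ideal A) :=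
    fun n => Submodule.smul_le.mpr fun r hr m _ => (I ^ n).mul_mem_right m hr
  have hmemIn : ∀ (n : ℕ) (z : A), z ∈ (I ^ n : Ideal A) ↔ (p : A) ^ n ∣ z := by
    intro n z
    rw [hI, Ideal.span_singleton_pow, Ideal.mem_span_singleton]
  -- one approximation step
  have hstep : ∀ y : A, ∃ cr : ((Fin d → Fin p) → A) × A,
      y = T cr.1 + (p : A) * cr.2 := by
    intro y
    obtain ⟨cbar, hcbar, -⟩ := hbasis (π y)
    choose c hc using fun a => Ideal.Quotient.mk_surjective (cbar a)
    have hmem : y - T c ∈ I := by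
      have : π (y - T c) = 0 := by
        rw [map_sub, hTmod]
        simp only [show ∀ a, π (c a) = cbar a from hc]
        rw [← hcbar, sub_self]
      rwa [hπ, Ideal.Quotient.eq_zero_iff_mem] at this
    rw [hI, Ideal.mem_span_singleton] at hmem
    obtain ⟨r, hr⟩ := hmem
    exact ⟨(c, r), by rw [← hr]; ring⟩
  choose step hstep' using hstep
  -- full existence via completeness
  have hex : ∀ y : A, ∃ c : (Fin d → Fin p) → A, y = T c := by
    intro y
    set g : ℕ → A := fun n => (fun z => (step z).2)^[n] y with hg
    have hg0 : g 0 = y := rfl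
    have hgs : ∀ n, g (n + 1) = (step (g n)).2 := by
      intro n
      rw [hg]
      exact Function.iterate_succ_apply' _ n y
    set c : ℕ → (Fin d → Fin p) → A := fun n => (step (g n)).1 with hcdef
    set s : ℕ → (Fin d → Fin p) → A :=
      fun n a => ∑ k ∈ Finset.range n, (p : A) ^ k * c k a with hsdef
    have hclaim : ∀ n, y = T (s n) + (p : A) ^ n * g n := by
      intro n
      induction n with
      | zero =>
        have : s 0 = 0 := by funext a; simp [hsdef]
        rw [this, hT, Tcomb_zero]
        simp [hg0]
      | succ n ih =>
        have h2 : g n = T (c n) + (p : A) * g (n + 1) := by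
          rw [hgs n]; exact hstep' (g n)
        have hss : s (n + 1) = s n + fun a => (p : A) ^ n * c n a := by
          funext a
          simp [hsdef, Finset.sum_range_succ]
        have h3 : T (s (n + 1)) = T (s n) + (p : A) ^ n * T (c n) := by
          rw [hss, hT, Tcomb_add, Tcomb_pow_mul]
        rw [h3, ih, h2]
        ring
    have hlim : ∀ a : Fin d → Fin p, ∃ L : A, ∀ n,
        s n a ≡ L [SMOD (I ^ n • ⊤ : Submodule A A)] := by
      intro a
      apply IsPrecomplete.prec hcomp.toIsPrecomplete
      intro m n hmn
      rw [SModEq.sub_mem]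
      have hsum : s n a - s m a = ∑ k ∈ Finset.Ico m n, (p : A) ^ k * c k a := by
        rw [hsdef]
        exact (Finset.sum_Ico_eq_sub _ hmn).symm
      have hmem : s n a - s m a ∈ (I ^ m : Ideal A) := by
        rw [hmemIn, hsum]
        exact Finset.dvd_sum fun k hk =>
          dvd_mul_of_dvd_left (pow_dvd_pow _ (Finset.mem_Ico.mp hk).1) _
      have : s m a - s n a ∈ (I ^ m : Ideal A) := by
        rw [show s m a - s n a = -(s n a - s m a) by ring]
        exact neg_mem hmem
      simpa using Submodule.smul_mem_smul this (Submodule.mem_top (x := (1 : A)))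
    choose L hL using hlim
    refine ⟨L, ?_⟩
    have hdiff : ∀ n : ℕ, y - T L ∈ (I ^ n : Ideal A) := by
      intro n
      have h1 : y - T (s n) ∈ (I ^ n : Ideal A) := by
        rw [hmemIn, hclaim n]
        exact ⟨g n, by ring⟩
      have h2 : T (s n) - T L ∈ (I ^ n : Ideal A) := by
        rw [hT, ← Tcomb_sub, hmemIn]
        apply Tcomb_dvd
        intro a
        show (p : A) ^ n ∣ s n a - L a
        rw [← hmemIn]
        exact hle n ((SModEq.sub_mem).mp (hL a n))
      have := add_mem h1 h2
      rwa [show y - T (s n) + (T (s n) - T L) = y - T L by ring] at this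
    have : y - T L = 0 := by
      refine IsHausdorff.haus hcomp.toIsHausdorff _ fun n => ?_
      rw [SModEq.zero]
      simpa using Submodule.smul_mem_smul (hdiff n) (Submodule.mem_top (x := (1 : A)))
    exact sub_eq_zero.mp this
  -- the unique-representation statement
  have hexun : ∀ y : A, ∃! c : (Fin d → Fin p) → A, y = T c := by
    intro y
    obtain ⟨c, hc⟩ := hex y
    refine ⟨c, hc, fun c' hc' => ?_⟩
    have : T (c' - c) = 0 := by
      rw [hT, Tcomb_sub, ← hT, ← hc, ← hc', sub_self]
    have := hinj _ this
    funext a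
    have := congrFun this a
    simpa [sub_eq_zero] using this
  refine ⟨hexun, ?_⟩
  show @Module.FaithfullyFlat A A _ _ φ.toModule
  letI : Module A A := φ.toModule
  have hli : LinearIndependent A
      (fun a : Fin d → Fin p => ∏ i : Fin d, x i ^ ((a i : ℕ))) := by
    rw [Fintype.linearIndependent_iff]
    intro g hg
    have : T g = 0 := hg
    have := hinj g this
    exact fun i => congrFun this i
  have hsp : ⊤ ≤ Submodule.span A
      (Set.range fun a : Fin d → Fin p => ∏ i : Fin d, x i ^ ((a i : ℕ))) := by
    intro y _
    obtain ⟨c, hc⟩ := hex y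
    rw [show y = T c from hc, hT]
    unfold Tcomb
    apply Submodule.sum_mem
    intro a _
    exact Submodule.smul_mem _ (c a) (Submodule.subset_span (Set.mem_range_self a))
  let b : Module.Basis (Fin d → Fin p) A A := Module.Basis.mk hli hsp
  haveI : Module.Free A A := Module.Free.of_basis b
  rcases subsingleton_or_nontrivial A with hs | hn
  · refine { toFlat := Module.Flat.of_free, submodule_ne_top := ?_ }
    intro m hm
    exact absurd ((Ideal.eq_top_iff_one m).2
      (by rw [Subsingleton.elim (1 : A) 0]; exact m.zero_mem)) hm.ne_top
  · infer_instance
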